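/- For all integers m, n, i ≥ 1 with i ≤ n, one has ∑_{a=0}^m (−1)^a · binom(m+n, a+i−1) · binom(a+i−1, a) · binom(m+n−a−i, m−a) = (−1)^m · binom(m+n, i−1). -/

import Mathlib

private lemma alt_zero (r K : ℕ) (hr : 1 ≤ r) (hK : r ≤ K) :
    ∑ a ∈ Finset.range (r + 1),
      (-1 : ℤ) ^ a * (K.choose a : ℤ) * ((K - a).choose (r - a) : ℤ) = 0 := by
  have h : ∀ a ∈ Finset.range (r + 1),
      (-1 : ℤ) ^ a * (K.choose a : ℤ) * ((K - a).choose (r - a) : ℤ)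
        = (K.choose r : ℤ) * ((-1 : ℤ) ^ a * (r.choose a : ℤ)) := by
    intro a ha
    have har : a ≤ r := by simpa [Nat.lt_succ_iff] using ha
    have hc := Nat.choose_mul (n := K) har
    have h2 : ((K.choose r : ℤ)) * (r.choose a : ℤ)
        = (K.choose a : ℤ) * ((K - a).choose (r - a) : ℤ) := by exact_mod_cast hc
    linear_combination (-(-1 : ℤ) ^ a) * h2
  rw [Finset.sum_congr rfl h, ← Finset.mul_sum,
    Int.alternating_sum_range_choose_of_ne (by omega : r ≠ 0), mul_zero]

private lemma key_sum (m : ℕ) : ∀ K : ℕ, m + 1 ≤ K →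
    ∑ a ∈ Finset.range (m + 1),
      (-1 : ℤ) ^ a * (K.choose a : ℤ) * ((K - 1 - a).choose (m - a) : ℤ) = (-1 : ℤ) ^ m := by
  induction m with
  | zero => intro K hK; simp
  | succ m ih =>
    intro K hK
    obtain ⟨J, rfl⟩ : ∃ J, K = J + 1 := ⟨K - 1, by omega⟩
    have hJ : m + 1 ≤ J := by omega
    have hz := alt_zero (m + 1) J (by omega) hJ
    have ihJ := ih J hJ
    rw [Finset.sum_range_succ'] at hz ⊢
    have e1 : ∀ b ∈ Finset.range (m + 1),
        (-1 : ℤ) ^ (b + 1) * (((J + 1).choose (b + 1) : ℤ))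
            * (((J + 1 - 1 - (b + 1)).choose (m + 1 - (b + 1)) : ℤ))
          = -((-1 : ℤ) ^ b * (J.choose b : ℤ) * ((J - 1 - b).choose (m - b) : ℤ))
            + -((-1 : ℤ) ^ b * (J.choose (b + 1) : ℤ) * ((J - 1 - b).choose (m - b) : ℤ)) := by
      intro b _
      have hp : (J + 1).choose (b + 1) = J.choose b + J.choose (b + 1) := Nat.choose_succ_succ' J b
      have h2 : J + 1 - 1 - (b + 1) = J - 1 - b := by omega
      have h3 : m + 1 - (b + 1) = m - b := by omega
      rw [hp, h2, h3]; push_cast; ring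
    have e2 : ∀ b ∈ Finset.range (m + 1),
        (-1 : ℤ) ^ (b + 1) * (J.choose (b + 1) : ℤ) * ((J - (b + 1)).choose (m + 1 - (b + 1)) : ℤ)
          = -((-1 : ℤ) ^ b * (J.choose (b + 1) : ℤ) * ((J - 1 - b).choose (m - b) : ℤ)) := by
      intro b _
      have h2 : J - (b + 1) = J - 1 - b := by omega
      have h3 : m + 1 - (b + 1) = m - b := by omega
      rw [h2, h3]; ring
    rw [Finset.sum_congr rfl e1, Finset.sum_add_distrib]
    rw [Finset.sum_congr rfl e2] at hz
    have hA : ∑ b ∈ Finset.range (m + 1),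
        -((-1 : ℤ) ^ b * (J.choose b : ℤ) * ((J - 1 - b).choose (m - b) : ℤ))
          = -(-1 : ℤ) ^ m := by
      rw [Finset.sum_neg_distrib, ihJ]
    simp only [pow_zero, Nat.choose_zero_right, Nat.cast_one, one_mul, Nat.sub_zero,
      Nat.add_sub_cancel] at hz ⊢
    rw [hA, pow_succ]
    linarith [hz]

theorem binom_identity_two (m n i : ℕ) (hm : 1 ≤ m) (hn : 1 ≤ n) (hi : 1 ≤ i) (hin : i ≤ n) :
    ∑ a ∈ Finset.range (m + 1),
      (-1 : ℤ) ^ a * ((m + n).choose (a + i - 1) : ℤ) * ((a + i - 1).choose a : ℤ)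
        * ((m + n - a - i).choose (m - a) : ℤ)
    = (-1 : ℤ) ^ m * ((m + n).choose (i - 1) : ℤ) := by
  have hM : m + 1 ≤ m + n + 1 - i := by omega
  have hkey := key_sum m (m + n + 1 - i) hM
  have e : ∀ a ∈ Finset.range (m + 1),
      (-1 : ℤ) ^ a * ((m + n).choose (a + i - 1) : ℤ) * ((a + i - 1).choose a : ℤ)
          * ((m + n - a - i).choose (m - a) : ℤ)
        = ((m + n).choose (i - 1) : ℤ) * ((-1 : ℤ) ^ a * ((m + n + 1 - i).choose a : ℤ)
            * ((m + n + 1 - i - 1 - a).choose (m - a) : ℤ)) := by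
    intro a ha
    have ham : a ≤ m := by simpa [Nat.lt_succ_iff] using ha
    have h1 : a + i - 1 = a + (i - 1) := by omega
    have hkn : a + (i - 1) ≤ m + n := by omega
    have hsk : i - 1 ≤ a + (i - 1) := by omega
    have hc := Nat.choose_mul (n := m + n) hsk
    have hsym : (a + (i - 1)).choose a = (a + (i - 1)).choose (i - 1) := Nat.choose_symm_add
    have h4 : m + n - (i - 1) = m + n + 1 - i := by omega
    have h5 : a + (i - 1) - (i - 1) = a := by omega
    have h6 : m + n - a - i = m + n + 1 - i - 1 - a := by omega
    rw [h4, h5] at hc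
    have hc' : ((m + n).choose (a + (i - 1)) : ℤ) * (((a + (i - 1)).choose (i - 1)) : ℤ)
        = ((m + n).choose (i - 1) : ℤ) * ((m + n + 1 - i).choose a : ℤ) := by exact_mod_cast hc
    rw [h1, hsym, h6]
    linear_combination ((-1 : ℤ) ^ a * ((m + n + 1 - i - 1 - a).choose (m - a) : ℤ)) * hc'
  rw [Finset.sum_congr rfl e, ← Finset.mul_sum, hkey]
  ring
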